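/- Let (M, g, J, ω) be a Kähler manifold and F a holomorphic function with f = Re F. Then the commutator of the Lefschetz operator L (wedging with ω) with the adjoint Lie derivative term vanishes on compactly supported forms: [L, 𝓛_{∇f}*] α = (d^c d f) ∧ α = 0, using the Kähler identity [L, δ] = d^c and the pluriharmonicity d^c d f = 0 of f = Re F. -/
import Mathlib

/-- **`[L, 𝓛_{∇f}^*] = (d^c d f) ∧ · = 0` for `f = Re F` on a Kähler manifold.**
Here `𝓛_{∇f}^* = δ ∘ (df ∧ ·) + (df ∧ ·) ∘ δ`, the Kähler identity `[L, δ] = d^c`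
holds, `d^c` is an antiderivation against the 1-form `df`, and `d^c df = 0` by
pluriharmonicity of `f = Re F`. -/
theorem stmt19 (Ω : Type*) [Ring Ω] [Algebra ℝ Ω]
    (δ dc : Ω →ₗ[ℝ] Ω) (ω df : Ω)
    (hKaehler : ∀ a : Ω, ω * δ a - δ (ω * a) = dc a)
    (hcomm : ∀ x : Ω, ω * x = x * ω)
    (hanti : ∀ a : Ω, dc (df * a) = dc df * a - df * dc a)
    (hpluri : dc df = 0) :
    ∀ α : Ω, (ω * (δ (df * α) + df * δ α) - (δ (df * (ω * α)) + df * δ (ω * α))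
        = dc df * α) ∧ dc df * α = 0 := by
  intro α
  constructor
  · have h1 : df * (ω * α) = ω * (df * α) := by
      rw [← mul_assoc, ← hcomm df, mul_assoc]
    have h2 := hKaehler (df * α)
    have h3 := hKaehler α
    have h4 := hanti (δ α)
    have h5 := hanti α
    rw [h1]
    calc ω * (δ (df * α) + df * δ α) - (δ (ω * (df * α)) + df * δ (ω * α))
        = (ω * δ (df * α) - δ (ω * (df * α))) + df * (ω * δ α - δ (ω * α)) := by
          rw [mul_add, ← mul_assoc ω df (δ α), hcomm df, mul_assoc, mul_sub df]; abel
      _ = dc (df * α) + df * dc α := by rw [h2, h3]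
      _ = dc df * α := by rw [h5]; abel
  · rw [hpluri, zero_mul]
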